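/- arXiv:1711.02411 — 4 statements merged into one kernel-verified Lean document; each statement's English description precedes it below -/
import Mathlib

section
/- Let F = Sur_1(n,k) be the set of surjective functions from [n] to [k], with whirl maps w_i and w = w_n ∘ ⋯ ∘ w_1. Then for every w-orbit O and every j ∈ [k], the average over f in O of #{i ∈ [n] : f(i) = j} equals n/k. -/
open Finset

open scoped Classical

open Fin.NatCast in
noncomputable def whirl {n k : ℕ} [NeZero k] (F : Set (Fin n → Fin k)) (i : Fin n)
    (f : Fin n → Fin k) : Fin n → Fin k :=
  if h : ∃ t : ℕ, 0 < t ∧ Function.update f i (f i + (t : Fin k)) ∈ F then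
    Function.update f i (f i + ((Nat.find h : ℕ) : Fin k))
  else f

noncomputable def whirlAll {n k : ℕ} [NeZero k] (F : Set (Fin n → Fin k))
    (f : Fin n → Fin k) : Fin n → Fin k :=
  (List.finRange n).foldl (fun g i => whirl F i g) f

noncomputable def orbitOf {α : Type*} [Fintype α] [DecidableEq α] (w : α → α) (f : α) :
    Finset α :=
  Finset.univ.filter fun g => ∃ m : ℕ, w^[m] f = g

namespace WhirlProof

variable {n k : ℕ}

/-- The simplified whirl step for surjective functions. -/
noncomputable def W [NeZero k] (i : Fin n) (g : Fin n → Fin k) : Fin n → Fin k :=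
  if ∃ p, p ≠ i ∧ g p = g i then Function.update g i (g i + 1) else g

section Wlemmas
variable [NeZero k]

lemma W_of_multi {i : Fin n} {g : Fin n → Fin k} (h : ∃ p, p ≠ i ∧ g p = g i) :
    W i g = Function.update g i (g i + 1) := if_pos h

lemma W_of_unique {i : Fin n} {g : Fin n → Fin k} (h : ¬ ∃ p, p ≠ i ∧ g p = g i) :
    W i g = g := if_neg h

lemma W_apply_ne {i p : Fin n} (hp : p ≠ i) (g : Fin n → Fin k) : W i g p = g p := by
  unfold W; split
  · exact Function.update_of_ne hp _ g
  · rfl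

lemma W_apply_cases (i : Fin n) (g : Fin n → Fin k) :
    W i g i = g i ∨ W i g i = g i + 1 := by
  unfold W; split
  · right; simp
  · left; rfl

lemma update_surjective {i : Fin n} {g : Fin n → Fin k} (hg : Function.Surjective g)
    (h : ∃ p, p ≠ i ∧ g p = g i) : Function.Surjective (Function.update g i (g i + 1)) := by
  obtain ⟨p, hpi, hpv⟩ := h
  intro u
  by_cases hu : u = g i + 1
  · exact ⟨i, by simp [hu]⟩
  · obtain ⟨q, hq⟩ := hg u
    by_cases hqi : q = i
    · subst hqi
      exact ⟨p, by rw [Function.update_of_ne hpi, hpv]; exact hq⟩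
    · exact ⟨q, by rw [Function.update_of_ne hqi]; exact hq⟩

lemma W_surjective {i : Fin n} {g : Fin n → Fin k} (hg : Function.Surjective g) :
    Function.Surjective (W i g) := by
  unfold W; split
  · exact update_surjective hg ‹_›
  · exact hg


lemma find_eq_of {p : ℕ → Prop} (hex : ∃ t, p t) {m : ℕ} (hm : p m)
    (hmin : ∀ t, t < m → ¬ p t) (inst : DecidablePred p) :
    @Nat.find p inst hex = m := by
  rw [Nat.find_eq_iff]
  exact ⟨hm, hmin⟩

open Fin.NatCast in
lemma whirl_eq_W {i : Fin n} {g : Fin n → Fin k} (hg : Function.Surjective g) :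
    whirl {h : Fin n → Fin k | Function.Surjective h} i g = W i g := by
  rw [whirl]
  split
  case isFalse hex =>
    exfalso
    refine hex ⟨k, Nat.pos_of_ne_zero (NeZero.ne k), ?_⟩
    simp only [Fin.natCast_self, add_zero, Function.update_eq_self, Set.mem_setOf_eq]
    exact hg
  case isTrue hex =>
    by_cases hm : ∃ p, p ≠ i ∧ g p = g i
    · have h1 : (fun t : ℕ => 0 < t ∧ Function.update g i (g i + (t : Fin k)) ∈
          {h : Fin n → Fin k | Function.Surjective h}) 1 := by
        refine ⟨one_pos, ?_⟩
        simpa using update_surjective hg hm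
      have h2 : ∀ t, t < 1 → ¬ (fun t : ℕ => 0 < t ∧ Function.update g i (g i + (t : Fin k)) ∈
          {h : Fin n → Fin k | Function.Surjective h}) t := by
        intro t ht
        interval_cases t
        simp
      rw [find_eq_of hex h1 h2, W_of_multi hm]
      norm_num
    · push_neg at hm
      have h1 : (fun t : ℕ => 0 < t ∧ Function.update g i (g i + (t : Fin k)) ∈
          {h : Fin n → Fin k | Function.Surjective h}) k := by
        refine ⟨Nat.pos_of_ne_zero (NeZero.ne k), ?_⟩
        simpa [Fin.natCast_self] using hg
      have h2 : ∀ t, t < k → ¬ (fun t : ℕ => 0 < t ∧ Function.update g i (g i + (t : Fin k)) ∈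
          {h : Fin n → Fin k | Function.Surjective h}) t := by
        intro t htk
        rintro ⟨ht0, hsurj⟩
        have htne : (t : Fin k) ≠ 0 := by
          have hv : ((t : Fin k)).val = t := by
            simp [Fin.val_natCast, Nat.mod_eq_of_lt htk]
          intro h0
          rw [h0] at hv
          simp at hv
          omega
        obtain ⟨q, hq⟩ := hsurj (g i)
        by_cases hqi : q = i
        · rw [hqi, Function.update_self] at hq
          exact htne (by rwa [add_eq_left] at hq)
        · rw [Function.update_of_ne hqi] at hq
          exact hm q hqi hq
      rw [find_eq_of hex h1 h2, W_of_unique (by push_neg; exact hm)]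
      simp [Fin.natCast_self]

/-- W is injective on surjective functions, when `k ≥ 2`. -/
lemma W_inj (hone : (1 : Fin k) ≠ 0) {i : Fin n} {g g' : Fin n → Fin k}
    (hg : Function.Surjective g) (hg' : Function.Surjective g')
    (h : W i g = W i g') : g = g' := by
  have self_ne : ∀ x : Fin k, x + 1 ≠ x := by
    intro x hx
    exact hone (by rwa [add_eq_left] at hx)
  by_cases ha : ∃ p, p ≠ i ∧ g p = g i <;> by_cases hb : ∃ p, p ≠ i ∧ g' p = g' i
  · rw [W_of_multi ha, W_of_multi hb] at h
    funext p
    by_cases hpi : p = i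
    · subst hpi
      have := congrFun h p
      simpa using this
    · have := congrFun h p
      rwa [Function.update_of_ne hpi, Function.update_of_ne hpi] at this
  · -- g moved, g' frozen: contradiction
    rw [W_of_multi ha, W_of_unique hb] at h
    push_neg at hb
    exfalso
    obtain ⟨q, hq⟩ := hg (g i + 1)
    have hqi : q ≠ i := by
      intro hqi; rw [hqi] at hq; exact self_ne _ hq.symm
    have h1 : g q = g' q := by
      have := congrFun h q
      rwa [Function.update_of_ne hqi] at this
    have h2 : g i + 1 = g' i := by
      have := congrFun h i
      rwa [Function.update_self] at this
    exact hb q hqi (by rw [h1.symm, hq, h2.symm])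
  · rw [W_of_unique ha, W_of_multi hb] at h
    push_neg at ha
    exfalso
    obtain ⟨q, hq⟩ := hg' (g' i + 1)
    have hqi : q ≠ i := by
      intro hqi; rw [hqi] at hq; exact self_ne _ hq.symm
    have h1 : g' q = g q := by
      have := congrFun h.symm q
      rwa [Function.update_of_ne hqi] at this
    have h2 : g' i + 1 = g i := by
      have := congrFun h.symm i
      rwa [Function.update_self] at this
    exact ha q hqi (by rw [h1.symm, hq, h2.symm])
  · rwa [W_of_unique ha, W_of_unique hb] at h

end Wlemmas

section Dynamics

variable [NeZero k] [NeZero n]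

/-- The position processed at (global) step `s`. -/
def idx (n : ℕ) [NeZero n] (s : ℕ) : Fin n :=
  ⟨s % n, Nat.mod_lt _ (Nat.pos_of_ne_zero (NeZero.ne n))⟩

lemma idx_val (s : ℕ) : (idx n s).val = s % n := rfl

lemma idx_inj {u u' : ℕ} (h1 : u < u') (h2 : u' < u + n) (h3 : idx n u = idx n u') : False := by
  have hv : u % n = u' % n := congrArg Fin.val h3
  have hu := Nat.div_add_mod u n
  have hu' := Nat.div_add_mod u' n
  have hab : u / n < u' / n := by
    by_contra hc
    push_neg at hc
    have := Nat.mul_le_mul_left n hc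
    omega
  have h4 := Nat.mul_le_mul_left n (Nat.succ_le_of_lt hab)
  rw [Nat.mul_succ] at h4
  omega

lemma idx_add_mul (s m : ℕ) : idx n (s + m * n) = idx n s := by
  apply Fin.ext
  simp [idx_val, Nat.add_mul_mod_self_right]

lemma exists_idx (s : ℕ) (p : Fin n) : ∃ u, s ≤ u ∧ u < s + n ∧ idx n u = p := by
  have hn : 0 < n := Nat.pos_of_ne_zero (NeZero.ne n)
  have hr : s % n < n := Nat.mod_lt _ hn
  have hd : n * (s / n) + s % n = s := Nat.div_add_mod s n
  have hp : p.val < n := p.isLt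
  by_cases hc : s % n ≤ p.val
  · refine ⟨s - s % n + p.val, by omega, by omega, ?_⟩
    apply Fin.ext
    rw [idx_val]
    have : s - s % n + p.val = n * (s / n) + p.val := by omega
    rw [this, Nat.mul_add_mod]
    exact Nat.mod_eq_of_lt hp
  · refine ⟨s - s % n + n + p.val, by omega, by omega, ?_⟩
    apply Fin.ext
    rw [idx_val]
    have hd2 : n * (s / n + 1) = n * (s / n) + n := by ring
    have : s - s % n + n + p.val = n * (s / n + 1) + p.val := by omega
    rw [this, Nat.mul_add_mod]
    exact Nat.mod_eq_of_lt hp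

variable (f : Fin n → Fin k)

/-- The state of the system after `s` elementary whirl steps, starting from `f`. -/
noncomputable def steps : ℕ → (Fin n → Fin k)
  | 0 => f
  | (s+1) => W (idx n s) (steps s)

lemma steps_surj (hf : Function.Surjective f) (s : ℕ) : Function.Surjective (steps f s) := by
  induction s with
  | zero => exact hf
  | succ s ih => exact W_surjective ih

lemma steps_succ_ne {s : ℕ} {p : Fin n} (hp : p ≠ idx n s) :
    steps f (s+1) p = steps f s p := W_apply_ne hp _

/-- Step `s` freezes value `v`: the processed position is the unique preimage of `v`. -/
def Frz (v : Fin k) (s : ℕ) : Prop :=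
  steps f s (idx n s) = v ∧ ∀ p, p ≠ idx n s → steps f s p ≠ v

lemma steps_succ_frz {v : Fin k} {s : ℕ} (h : Frz f v s) : steps f (s+1) = steps f s := by
  show W (idx n s) (steps f s) = steps f s
  apply W_of_unique
  rintro ⟨p, hpi, hpv⟩
  exact h.2 p hpi (by rw [hpv, h.1])

lemma steps_succ_move {v : Fin k} {s : ℕ} (hval : steps f s (idx n s) = v)
    (hnf : ¬ Frz f v s) : steps f (s+1) (idx n s) = v + 1 := by
  have hm : ∃ p, p ≠ idx n s ∧ steps f s p = steps f s (idx n s) := by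
    by_contra hc
    push_neg at hc
    exact hnf ⟨hval, fun p hp hpv => hc p hp (by rw [hpv, hval])⟩
  show W (idx n s) (steps f s) (idx n s) = v + 1
  rw [W_of_multi hm, Function.update_self, hval]

lemma steps_succ_cases (s : ℕ) :
    steps f (s+1) (idx n s) = steps f s (idx n s) ∨
    steps f (s+1) (idx n s) = steps f s (idx n s) + 1 := W_apply_cases _ _

lemma frz_or_move (s : ℕ) :
    (Frz f (steps f s (idx n s)) s ∧ steps f (s+1) = steps f s) ∨
    (¬ Frz f (steps f s (idx n s)) s ∧ steps f (s+1) (idx n s) = steps f s (idx n s) + 1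
      ∧ ∀ p, p ≠ idx n s → steps f (s+1) p = steps f s p) := by
  by_cases h : Frz f (steps f s (idx n s)) s
  · exact Or.inl ⟨h, steps_succ_frz f h⟩
  · exact Or.inr ⟨h, steps_succ_move f rfl h, fun p hp => steps_succ_ne f hp⟩

/-- Fact D: after a step establishing `i` as unique holder of `v` (with `i` processed
at step `s0`), no position holding `v` is processed during the next `n-1` steps. -/
lemma no_value_processed {v : Fin k} {s0 : ℕ}
    (hv : steps f (s0+1) (idx n s0) = v)
    (hu : ∀ p, p ≠ idx n s0 → steps f (s0+1) p ≠ v) :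
    ∀ s, s0 < s → s < s0 + n → steps f s (idx n s) ≠ v := by
  have P2 : ∀ d, ∀ p, p ≠ idx n s0 → steps f (s0+1+d) p = v →
      ∃ u, s0 < u ∧ u < s0+1+d ∧ idx n u = p := by
    intro d
    induction d with
    | zero => intro p hp hval; exact absurd hval (hu p hp)
    | succ d ih =>
      intro p hp hval
      by_cases hpi : p = idx n (s0+1+d)
      · exact ⟨s0+1+d, by omega, by omega, hpi.symm⟩
      · have hprev : steps f (s0+1+d) p = v := by
          rw [← hval]; exact (steps_succ_ne f hpi).symm
        obtain ⟨u, h1, h2, h3⟩ := ih p hp hprev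
        exact ⟨u, h1, by omega, h3⟩
  intro s hs1 hs2 hval
  have hpne : idx n s ≠ idx n s0 := by
    intro h
    exact idx_inj (u := s0) (u' := s) hs1 (by omega) h.symm
  obtain ⟨d, hd⟩ : ∃ d, s = s0+1+d := ⟨s - (s0+1), by omega⟩
  subst hd
  obtain ⟨u, h1, h2, h3⟩ := P2 d (idx n (s0+1+d)) hpne hval
  exact idx_inj (u := u) (u' := s0+1+d) h2 (by omega) h3

/-- The key lemma: after a step establishing `i` as unique holder of `v`
(`i` processed at step `s0`), there is a freeze of `v+1` within the next `n-1` steps. -/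
lemma exists_frz_succ (hone : (1:Fin k) ≠ 0) (hf : Function.Surjective f) {v : Fin k} {s0 : ℕ}
    (hv : steps f (s0+1) (idx n s0) = v)
    (hu : ∀ p, p ≠ idx n s0 → steps f (s0+1) p ≠ v) :
    ∃ u, s0 < u ∧ u < s0 + n ∧ Frz f (v+1) u := by
  by_contra hnf
  push_neg at hnf
  have hD := no_value_processed f hv hu
  have P1 : ∀ d, d < n → ∀ p, steps f (s0+1+d) p = v + 1 →
      steps f (s0+1) p = v + 1 ∧ ∀ u, s0 < u → u < s0+1+d → idx n u ≠ p := by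
    intro d
    induction d with
    | zero =>
      intro _ p hval
      refine ⟨hval, ?_⟩
      intro u h1 h2
      exact absurd h1 (by omega)
    | succ d ih =>
      intro hdn p hval
      have hval' : steps f (s0+1+d+1) p = v + 1 := hval
      by_cases hpi : p = idx n (s0+1+d)
      · exfalso
        rw [hpi] at hval'
        by_cases hc : steps f (s0+1+d) (idx n (s0+1+d)) = v + 1
        · have hnfz : ¬ Frz f (v+1) (s0+1+d) := hnf (s0+1+d) (by omega) (by omega)
          have hmv := steps_succ_move f hc hnfz
          have : v + 1 = v + 1 + 1 := hval'.symm.trans hmv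
          exact hone (by rwa [left_eq_add] at this)
        · rcases steps_succ_cases f (s0+1+d) with hcs | hcs
          · rw [hval'] at hcs
            exact hc hcs.symm
          · have h2 : steps f (s0+1+d) (idx n (s0+1+d)) + 1 = v + 1 := by rw [← hcs, hval']
            have hsv : steps f (s0+1+d) (idx n (s0+1+d)) = v := add_right_cancel h2
            exact hD (s0+1+d) (by omega) (by omega) hsv
      · have hprev : steps f (s0+1+d) p = v + 1 := by
          rw [← hval]; exact (steps_succ_ne f hpi).symm
        obtain ⟨hbase, hnp⟩ := ih (by omega) p hprev
        refine ⟨hbase, ?_⟩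
        intro u h1 h2
        by_cases hu2 : u < s0+1+d
        · exact hnp u h1 hu2
        · have heq : u = s0+1+d := by omega
          rw [heq]
          exact fun he => hpi he.symm
  have hn1 : 1 ≤ n := Nat.pos_of_ne_zero (NeZero.ne n)
  obtain ⟨p, hp⟩ := steps_surj f hf (s0+n) (v+1)
  have hsn : s0 + n = s0 + 1 + (n-1) := by omega
  rw [hsn] at hp
  obtain ⟨hbase, hnp⟩ := P1 (n-1) (by omega) p hp
  have hpne : p ≠ idx n s0 := by
    intro he
    rw [he, hv] at hbase
    exact hone (by rwa [left_eq_add] at hbase)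
  obtain ⟨u, hu1, hu2, hu3⟩ := exists_idx s0 p
  have hune : u ≠ s0 := by
    intro he
    rw [he] at hu3
    exact hpne hu3.symm
  exact hnp u (by omega) (by omega) hu3

lemma steps_pass_aux (a : ℕ) (ha : a % n = 0) :
    ∀ d r, r + d = n →
      ((List.finRange n).drop r).foldl (fun g i => W i g) (steps f (a + r)) = steps f (a + n) := by
  intro d
  induction d with
  | zero =>
    intro r hr
    have hrn : r = n := by omega
    subst hrn
    rw [List.drop_eq_nil_of_le (by simp)]
    rfl
  | succ d ih =>
    intro r hr
    have hrl : r < (List.finRange n).length := by simp; omega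
    rw [List.drop_eq_getElem_cons hrl, List.foldl_cons]
    have hidx : idx n (a + r) = (List.finRange n)[r] := by
      rw [List.getElem_finRange]
      apply Fin.ext
      simp only [idx_val, Fin.coe_cast]
      rw [Nat.add_mod, ha]
      simp [Nat.mod_eq_of_lt (show r < n by omega)]
    have hw : W ((List.finRange n)[r]) (steps f (a + r)) = steps f (a + r + 1) := by
      rw [← hidx]; rfl
    rw [hw]
    have := ih (r+1) (by omega)
    rwa [show a + (r+1) = a + r + 1 by omega] at this

lemma foldl_whirl_eq_foldl_W :
    ∀ (l : List (Fin n)) (g : Fin n → Fin k), Function.Surjective g →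
      l.foldl (fun g i => whirl {h : Fin n → Fin k | Function.Surjective h} i g) g =
      l.foldl (fun g i => W i g) g := by
  intro l
  induction l with
  | nil => intro g _; rfl
  | cons i t ih =>
    intro g hg
    simp only [List.foldl_cons]
    rw [whirl_eq_W hg]
    exact ih _ (W_surjective hg)

lemma whirlAll_steps (hf : Function.Surjective f) (a : ℕ) (ha : a % n = 0) :
    whirlAll {h : Fin n → Fin k | Function.Surjective h} (steps f a) = steps f (a + n) := by
  rw [whirlAll, foldl_whirl_eq_foldl_W _ _ (steps_surj f hf a)]
  have := steps_pass_aux f a ha n 0 (by omega)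
  simpa using this

lemma iterate_whirlAll (hf : Function.Surjective f) (t : ℕ) :
    (whirlAll {h : Fin n → Fin k | Function.Surjective h})^[t] f = steps f (t*n) := by
  induction t with
  | zero => simp [steps]
  | succ t ih =>
    rw [Function.iterate_succ_apply', ih, whirlAll_steps f hf (t*n) (by simp),
      show t*n+n = (t+1)*n by ring]

lemma foldl_W_inj (hone : (1:Fin k) ≠ 0) :
    ∀ (l : List (Fin n)) (g g' : Fin n → Fin k), Function.Surjective g →
      Function.Surjective g' →
      l.foldl (fun g i => W i g) g = l.foldl (fun g i => W i g) g' → g = g' := by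
  intro l
  induction l with
  | nil => intro g g' _ _ h; exact h
  | cons i t ih =>
    intro g g' hg hg' h
    simp only [List.foldl_cons] at h
    exact W_inj hone hg hg' (ih _ _ (W_surjective hg) (W_surjective hg') h)

lemma whirlAll_inj (hone : (1:Fin k) ≠ 0) {g g' : Fin n → Fin k}
    (hg : Function.Surjective g) (hg' : Function.Surjective g')
    (h : whirlAll {h : Fin n → Fin k | Function.Surjective h} g =
      whirlAll {h : Fin n → Fin k | Function.Surjective h} g') : g = g' := by
  rw [whirlAll, whirlAll, foldl_whirl_eq_foldl_W _ _ hg, foldl_whirl_eq_foldl_W _ _ hg'] at h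
  exact foldl_W_inj hone _ _ _ hg hg' h

lemma iterate_surj (hf : Function.Surjective f) (t : ℕ) :
    Function.Surjective ((whirlAll {h : Fin n → Fin k | Function.Surjective h})^[t] f) := by
  rw [iterate_whirlAll f hf]
  exact steps_surj f hf _

lemma iterate_cancel (hone : (1:Fin k) ≠ 0) (hf : Function.Surjective f) :
    ∀ (a d : ℕ), (whirlAll {h : Fin n → Fin k | Function.Surjective h})^[a+d] f =
      (whirlAll {h : Fin n → Fin k | Function.Surjective h})^[a] f →
      (whirlAll {h : Fin n → Fin k | Function.Surjective h})^[d] f = f := by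
  intro a
  induction a with
  | zero => intro d h; simpa using h
  | succ a ih =>
    intro d h
    rw [show a+1+d = (a+d)+1 by omega, Function.iterate_succ_apply',
      Function.iterate_succ_apply'] at h
    exact ih d (whirlAll_inj hone (iterate_surj f hf _) (iterate_surj f hf _) h)

lemma exists_period (hone : (1:Fin k) ≠ 0) (hf : Function.Surjective f) :
    ∃ m, 0 < m ∧ (whirlAll {h : Fin n → Fin k | Function.Surjective h})^[m] f = f := by
  obtain ⟨a, b, hne, heq⟩ := Finite.exists_ne_map_eq_of_infinite
    (fun t : ℕ => (whirlAll {h : Fin n → Fin k | Function.Surjective h})^[t] f)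
  rcases Nat.lt_or_ge a b with hab | hab
  · refine ⟨b - a, by omega, ?_⟩
    exact iterate_cancel f hone hf a (b-a) (by rw [show a + (b-a) = b by omega]; exact heq.symm)
  · have hba : b < a := by omega
    refine ⟨a - b, by omega, ?_⟩
    exact iterate_cancel f hone hf b (a-b) (by rw [show b + (a-b) = a by omega]; exact heq)

lemma steps_period {m : ℕ} (hm : steps f (m*n) = f) : ∀ s, steps f (s + m*n) = steps f s := by
  intro s
  induction s with
  | zero => rw [zero_add]; exact hm
  | succ s ih =>
    have h1 : steps f ((s + m*n) + 1) = W (idx n (s + m*n)) (steps f (s + m*n)) := rfl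
    rw [show s + 1 + m*n = (s + m*n) + 1 by omega, h1, ih, idx_add_mul]
    rfl

lemma frz_period {m : ℕ} (hm : steps f (m*n) = f) (v : Fin k) (s : ℕ) :
    Frz f v (s + m*n) ↔ Frz f v s := by
  unfold Frz
  rw [steps_period f hm, idx_add_mul]

/-- If `s` is a freeze of `v`, no other freeze of `v` (indeed no processing of `v`)
occurs in the next `n-1` steps. -/
lemma frz_factD {v : Fin k} {s : ℕ} (hfz : Frz f v s) :
    ∀ s2, s < s2 → s2 < s + n → steps f s2 (idx n s2) ≠ v := by
  have heq := steps_succ_frz f hfz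
  apply no_value_processed f (v := v) (s0 := s)
  · rw [heq]; exact hfz.1
  · intro p hp; rw [heq]; exact hfz.2 p hp

lemma frz_succ_exists (hone : (1:Fin k) ≠ 0) (hf : Function.Surjective f) {v : Fin k} {s : ℕ}
    (hfz : Frz f v s) : ∃ u, s < u ∧ u < s + n ∧ Frz f (v+1) u := by
  have heq := steps_succ_frz f hfz
  apply exists_frz_succ f hone hf (v := v) (s0 := s)
  · rw [heq]; exact hfz.1
  · intro p hp; rw [heq]; exact hfz.2 p hp

section Counting

variable (m : ℕ)

noncomputable def phi (v : Fin k) : ℕ :=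
  ((Finset.range (m*n)).filter (fun s => Frz f v s)).card

noncomputable def mov (v : Fin k) : ℕ :=
  ((Finset.range (m*n)).filter
    (fun s => steps f s (idx n s) = v ∧ ¬ Frz f v s)).card

noncomputable def cnt (v : Fin k) : ℕ :=
  ((Finset.range (m*n)).filter (fun s => steps f s (idx n s) = v)).card

lemma inj_aux (hm : 0 < m) (hper : steps f (m*n) = f) (v : Fin k)
    {s s' u u' : ℕ} (hs' : s' < m*n) (hss : s < s')
    (hfz : Frz f v s) (hfz' : Frz f v s')
    (hu1 : s < u) (hu2 : u < s + n) (hu3 : Frz f (v+1) u)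
    (hu1' : s' < u') (hu2' : u' < s' + n)
    (heq : u % (m*n) = u' % (m*n)) : False := by
  have hn : 0 < n := Nat.pos_of_ne_zero (NeZero.ne n)
  set N := m*n with hN
  have hnN : n ≤ N := Nat.le_mul_of_pos_left n hm
  -- s' is at distance ≥ n from s
  have hsep : s + n ≤ s' := by
    by_contra hc
    exact frz_factD f hfz s' hss (by omega) hfz'.1
  have huu : u < u' := by omega
  have hdvd : N ∣ u' - u := (Nat.modEq_iff_dvd' (le_of_lt huu)).mp heq
  have hub : u' - u < 2*N := by omega
  have huN : u' - u = N := by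
    obtain ⟨c, hc⟩ := hdvd
    have h0 : 0 < u' - u := by omega
    have hc0 : c ≠ 0 := by rintro rfl; omega
    have hc2 : c < 2 := by
      by_contra hge
      push_neg at hge
      have : 2*N ≤ N * c := by
        calc 2*N = N*2 := by ring
          _ ≤ N*c := Nat.mul_le_mul_left N hge
      omega
    have hc1 : c = 1 := by omega
    rw [hc1, Nat.mul_one] at hc
    omega
  have hfzsN : Frz f v (s + N) := (frz_period f hper v s).mpr hfz
  exact frz_factD f hfz' (s + N) (by omega) (by omega) hfzsN.1

lemma phi_le_succ (hone : (1:Fin k) ≠ 0) (hf : Function.Surjective f)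
    (hm : 0 < m) (hper : steps f (m*n) = f) (v : Fin k) :
    phi f m v ≤ phi f m (v+1) := by
  classical
  have hn : 0 < n := Nat.pos_of_ne_zero (NeZero.ne n)
  set N := m*n with hN
  have hN0 : 0 < N := Nat.mul_pos hm hn
  have hnN : n ≤ N := Nat.le_mul_of_pos_left n hm
  have hex : ∀ s ∈ (Finset.range N).filter (fun s => Frz f v s),
      ∃ u, s < u ∧ u < s + n ∧ Frz f (v+1) u := by
    intro s hs
    exact frz_succ_exists f hone hf (Finset.mem_filter.mp hs).2
  choose! g hg1 hg2 hg3 using hex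
  apply Finset.card_le_card_of_injOn (fun s => g s % N)
  · intro s hs
    simp only [Finset.mem_coe, Finset.mem_filter]
    constructor
    · exact Finset.mem_range.mpr (Nat.mod_lt _ hN0)
    · have h1 := hg1 s hs
      have h2 := hg2 s hs
      have h3 := hg3 s hs
      have hsN : s < N := Finset.mem_range.mp (Finset.mem_filter.mp hs).1
      by_cases hcase : g s < N
      · rwa [Nat.mod_eq_of_lt hcase]
      · have hmod : g s % N = g s - N := by
          rw [Nat.mod_eq_sub_mod (by omega), Nat.mod_eq_of_lt (by omega)]
        rw [hmod]
        have : g s - N + N = g s := by omega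
        exact (frz_period f hper (v+1) (g s - N)).mp (by rwa [this])
  · intro s hs s' hs' heq
    rcases Nat.lt_trichotomy s s' with h | h | h
    · exact absurd (inj_aux f m hm hper v (Finset.mem_range.mp (Finset.mem_filter.mp hs').1)
        h (Finset.mem_filter.mp hs).2 (Finset.mem_filter.mp hs').2
        (hg1 s hs) (hg2 s hs) (hg3 s hs) (hg1 s' hs') (hg2 s' hs') heq) (not_false)
    · exact h
    · exact absurd (inj_aux f m hm hper v (Finset.mem_range.mp (Finset.mem_filter.mp hs).1)
        h (Finset.mem_filter.mp hs').2 (Finset.mem_filter.mp hs).2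
        (hg1 s' hs') (hg2 s' hs') (hg3 s' hs') (hg1 s hs) (hg2 s hs) heq.symm) (not_false)

open Fin.NatCast in
lemma cyc_le_const {g : Fin k → ℕ} (h : ∀ v, g v ≤ g (v+1)) (v v' : Fin k) : g v = g v' := by
  have mono : ∀ (t : ℕ) (w : Fin k), g w ≤ g (w + (t : Fin k)) := by
    intro t
    induction t with
    | zero => intro w; simp
    | succ t ih =>
      intro w
      calc g w ≤ g (w + (t : Fin k)) := ih w
        _ ≤ g (w + (t : Fin k) + 1) := h _
        _ = g (w + ((t+1 : ℕ) : Fin k)) := by push_cast; rw [add_assoc]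
  have le1 : g v ≤ g v' := by
    have := mono ((v' - v).val) v
    rwa [Fin.cast_val_eq_self, show v + (v' - v) = v' by abel] at this
  have le2 : g v' ≤ g v := by
    have := mono ((v - v').val) v'
    rwa [Fin.cast_val_eq_self, show v' + (v - v') = v by abel] at this
  omega

lemma mov_eq_succ (hone : (1:Fin k) ≠ 0) (hper : steps f (m*n) = f) (v : Fin k) :
    mov f m v = mov f m (v+1) := by
  classical
  set N := m*n with hN
  set F : ℕ → ℤ := fun s => ∑ p : Fin n, (if steps f s p = v+1 then (1:ℤ) else 0) with hF
  have key : ∀ s, F (s+1) - F s =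
      (if (steps f s (idx n s) = v ∧ ¬ Frz f v s) then (1:ℤ) else 0) -
      (if (steps f s (idx n s) = v+1 ∧ ¬ Frz f (v+1) s) then (1:ℤ) else 0) := by
    intro s
    rw [hF]
    simp only
    rw [← Finset.sum_sub_distrib]
    rw [Finset.sum_eq_single (idx n s)]
    · rcases frz_or_move f s with ⟨hFrz, hEq⟩ | ⟨hnf, hmv, _⟩
      · rw [hEq]
        have h1 : ¬ (steps f s (idx n s) = v ∧ ¬ Frz f v s) := by
          rintro ⟨h, hn2⟩; exact hn2 (h ▸ hFrz)
        have h2 : ¬ (steps f s (idx n s) = v+1 ∧ ¬ Frz f (v+1) s) := by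
          rintro ⟨h, hn2⟩; exact hn2 (h ▸ hFrz)
        rw [if_neg h1, if_neg h2]
        ring
      · by_cases hxv : steps f s (idx n s) = v
        · have l1 : steps f (s+1) (idx n s) = v + 1 := by rw [hmv, hxv]
          have l2 : ¬ (steps f s (idx n s) = v + 1) := by
            rw [hxv]
            intro hc
            exact hone (by rwa [left_eq_add] at hc)
          rw [if_pos l1, if_neg l2, if_pos ⟨hxv, hxv ▸ hnf⟩,
            if_neg (fun hc => l2 hc.1)]
        · by_cases hxv1 : steps f s (idx n s) = v+1
          · have l1 : ¬ (steps f (s+1) (idx n s) = v + 1) := by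
              rw [hmv, hxv1]
              intro hc
              have hc2 := hc.symm
              exact hone (by rwa [left_eq_add] at hc2)
            rw [if_neg l1, if_pos hxv1, if_neg (fun hc => hxv (hc.1)),
              if_pos ⟨hxv1, hxv1 ▸ hnf⟩]
          · have l1 : ¬ (steps f (s+1) (idx n s) = v + 1) := by
              rw [hmv]
              intro hc
              exact hxv (add_right_cancel hc)
            rw [if_neg l1, if_neg hxv1, if_neg (fun hc => hxv hc.1),
              if_neg (fun hc => hxv1 hc.1)]
    · intro p _ hp
      rw [steps_succ_ne f hp]
      ring
    · intro hx
      exact absurd (Finset.mem_univ _) hx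
  have tel := Finset.sum_range_sub (fun s => F s) N
  have hF0 : F N = F 0 := by
    rw [hF]
    simp only
    have : steps f N = steps f 0 := hper
    rw [this]
  rw [hF0, sub_self] at tel
  have tel2 : ∑ s ∈ Finset.range N,
      ((if (steps f s (idx n s) = v ∧ ¬ Frz f v s) then (1:ℤ) else 0) -
       (if (steps f s (idx n s) = v+1 ∧ ¬ Frz f (v+1) s) then (1:ℤ) else 0)) = 0 := by
    rw [← Finset.sum_congr rfl (fun s _ => key s)]
    exact tel
  rw [Finset.sum_sub_distrib, sub_eq_zero] at tel2
  have cast1 : ((mov f m v : ℤ)) = ∑ s ∈ Finset.range N,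
      (if (steps f s (idx n s) = v ∧ ¬ Frz f v s) then (1:ℤ) else 0) := by
    rw [mov, Finset.card_filter]
    push_cast
    rfl
  have cast2 : ((mov f m (v+1) : ℤ)) = ∑ s ∈ Finset.range N,
      (if (steps f s (idx n s) = v+1 ∧ ¬ Frz f (v+1) s) then (1:ℤ) else 0) := by
    rw [mov, Finset.card_filter]
    push_cast
    rfl
  have : (mov f m v : ℤ) = (mov f m (v+1) : ℤ) := by rw [cast1, cast2]; exact tel2
  exact_mod_cast this

lemma cnt_split (v : Fin k) : cnt f m v = phi f m v + mov f m v := by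
  classical
  have hsplit := Finset.card_filter_add_card_filter_not
    (s := (Finset.range (m*n)).filter (fun s => steps f s (idx n s) = v))
    (p := fun s => Frz f v s)
  rw [Finset.filter_filter, Finset.filter_filter] at hsplit
  have e1 : ((Finset.range (m*n)).filter
      (fun s => steps f s (idx n s) = v ∧ Frz f v s)) =
      ((Finset.range (m*n)).filter (fun s => Frz f v s)) := by
    apply Finset.filter_congr
    intro s _
    constructor
    · exact fun h => h.2
    · exact fun h => ⟨h.1, h⟩
  rw [e1] at hsplit
  rw [cnt, phi, mov, ← hsplit]

lemma sum_cnt : ∑ v : Fin k, cnt f m v = m*n := by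
  classical
  have := Finset.card_eq_sum_card_fiberwise
    (s := Finset.range (m*n)) (t := Finset.univ)
    (f := fun s => steps f s (idx n s)) (fun s _ => Finset.mem_univ _)
  rw [Finset.card_range] at this
  rw [this]
  rfl

lemma cnt_le_succ (hone : (1:Fin k) ≠ 0) (hf : Function.Surjective f)
    (hm : 0 < m) (hper : steps f (m*n) = f) (v : Fin k) :
    cnt f m v ≤ cnt f m (v+1) := by
  rw [cnt_split, cnt_split, mov_eq_succ f m hone hper v]
  exact Nat.add_le_add_right (phi_le_succ f m hone hf hm hper v) _

lemma cnt_const (hone : (1:Fin k) ≠ 0) (hf : Function.Surjective f)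
    (hm : 0 < m) (hper : steps f (m*n) = f) (v v' : Fin k) :
    cnt f m v = cnt f m v' :=
  cyc_le_const (cnt_le_succ f m hone hf hm hper) v v'

lemma k_mul_cnt (hone : (1:Fin k) ≠ 0) (hf : Function.Surjective f)
    (hm : 0 < m) (hper : steps f (m*n) = f) (v : Fin k) :
    k * cnt f m v = m * n := by
  have : ∑ v' : Fin k, cnt f m v' = ∑ _v' : Fin k, cnt f m v :=
    Finset.sum_congr rfl (fun v' _ => cnt_const f m hone hf hm hper v' v)
  rw [sum_cnt] at this
  rw [this, Finset.sum_const, Finset.card_univ, Fintype.card_fin, smul_eq_mul]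

lemma steps_pass_get (a : ℕ) (ha : a % n = 0) :
    ∀ (r : ℕ) (p : Fin n), r ≤ p.val → steps f (a+r) p = steps f a p := by
  intro r
  induction r with
  | zero => intro p _; rfl
  | succ r ih =>
    intro p hp
    have hpn : p.val < n := p.isLt
    have hne : p ≠ idx n (a+r) := by
      intro he
      have hv : p.val = (a+r) % n := by rw [he]; rfl
      rw [Nat.add_mod, ha, zero_add] at hv
      simp only [Nat.mod_eq_of_lt (show r < n by omega)] at hv
      omega
    have h1 : steps f ((a+r)+1) p = steps f (a+r) p := steps_succ_ne f hne
    exact h1.trans (ih p (by omega))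

lemma idx_mul_add (t r : ℕ) (hr : r < n) : (idx n (t*n + r)).val = r := by
  rw [idx_val, add_comm, Nat.add_mul_mod_self_right]
  exact Nat.mod_eq_of_lt hr

lemma cnt_eq_sum_passes (v : Fin k) :
    ∀ (M : ℕ), cnt f M v =
      ∑ t ∈ Finset.range M, (Finset.univ.filter (fun p => steps f (t*n) p = v)).card := by
  intro M
  induction M with
  | zero => simp [cnt]
  | succ M ih =>
    rw [Finset.sum_range_succ, ← ih]
    have e1 : cnt f (M+1) v =
        ∑ s ∈ Finset.range (M*n + n), (if steps f s (idx n s) = v then 1 else 0) := by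
      rw [cnt, show (M+1)*n = M*n + n by ring, Finset.card_filter]
    have e2 : cnt f M v =
        ∑ s ∈ Finset.range (M*n), (if steps f s (idx n s) = v then 1 else 0) := by
      rw [cnt, Finset.card_filter]
    have e3 : (Finset.univ.filter (fun p => steps f (M*n) p = v)).card
        = ∑ p : Fin n, (if steps f (M*n) p = v then 1 else 0) := Finset.card_filter _ _
    rw [e1, e2, e3, Finset.sum_range_add]
    congr 1
    have hstep : ∀ r ∈ Finset.range n,
        (if steps f (M*n + r) (idx n (M*n + r)) = v then 1 else 0) =
        (if steps f (M*n) (idx n (M*n + r)) = v then 1 else 0) := by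
      intro r hr
      have hrn : r < n := Finset.mem_range.mp hr
      rw [steps_pass_get f (M*n) (by simp) r (idx n (M*n+r))
        (by rw [idx_mul_add M r hrn])]
    rw [Finset.sum_congr rfl hstep,
      ← Fin.sum_univ_eq_sum_range (fun r => if steps f (M*n) (idx n (M*n + r)) = v then 1 else 0) n]
    apply Finset.sum_congr rfl
    intro p _
    have hip : idx n (M*n + p.val) = p := Fin.ext (idx_mul_add M p.val p.isLt)
    rw [hip]

end Counting

lemma iterate_mod_period {d : ℕ}
    (hd : (whirlAll {h : Fin n → Fin k | Function.Surjective h})^[d] f = f) :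
    ∀ q r, (whirlAll {h : Fin n → Fin k | Function.Surjective h})^[d*q + r] f =
      (whirlAll {h : Fin n → Fin k | Function.Surjective h})^[r] f := by
  intro q
  induction q with
  | zero => simp
  | succ q ih =>
    intro r
    rw [show d*(q+1) + r = (d*q + r) + d by ring, Function.iterate_add_apply, hd]
    exact ih r

end Dynamics

end WhirlProof

theorem stmt2 {n k : ℕ} [NeZero k] (hkn : k ≤ n)
    (f : Fin n → Fin k) (hf : Function.Surjective f) (j : Fin k) :
    (∑ g ∈ orbitOf (whirlAll {h : Fin n → Fin k | Function.Surjective h}) f,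
        ((Finset.univ.filter fun i => g i = j).card : ℚ)) /
      ((orbitOf (whirlAll {h : Fin n → Fin k | Function.Surjective h}) f).card : ℚ)
      = (n : ℚ) / k := by
  classical
  have hk0 : k ≠ 0 := NeZero.ne k
  have hn0 : n ≠ 0 := by omega
  haveI : NeZero n := ⟨hn0⟩
  set wm := whirlAll {h : Fin n → Fin k | Function.Surjective h} with hwm
  set O := orbitOf wm f with hO
  have hfO : f ∈ O := by
    rw [hO, orbitOf]
    exact Finset.mem_filter.mpr ⟨Finset.mem_univ _, ⟨0, rfl⟩⟩
  by_cases hone : (1 : Fin k) = 0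
  · -- k = 1 case
    have hk1 : k = 1 := by
      by_contra hk
      have hk2 : 2 ≤ k := by omega
      have : (1 : Fin k).val = 0 := by rw [hone]; rfl
      rw [Fin.val_one'] at this
      rw [Nat.mod_eq_of_lt hk2] at this
      omega
    subst hk1
    have hall : ∀ g : Fin n → Fin 1, (Finset.univ.filter fun i => g i = j).card = n := by
      intro g
      rw [Finset.filter_true_of_mem (fun i _ => Subsingleton.elim _ _)]
      simp
    have hsum : (∑ g ∈ O, ((Finset.univ.filter fun i => g i = j).card : ℚ))
        = (O.card : ℚ) * n := by
      rw [Finset.sum_congr rfl (fun g _ => by rw [hall g])]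
      rw [Finset.sum_const, nsmul_eq_mul]
    rw [hsum]
    have hOcard : (O.card : ℚ) ≠ 0 := by
      have : 0 < O.card := Finset.card_pos.mpr ⟨f, hfO⟩
      exact_mod_cast this.ne'
    field_simp
    norm_num
  · -- main case k ≥ 2
    obtain ⟨mex, hmexpos, hmexper⟩ := WhirlProof.exists_period f hone hf
    have hex : ∃ d, 0 < d ∧ wm^[d] f = f := ⟨mex, hmexpos, hmexper⟩
    set m₀ := Nat.find hex with hm₀
    obtain ⟨hm₀pos, hm₀per⟩ := Nat.find_spec hex
    have hmin : ∀ d, d < m₀ → ¬(0 < d ∧ wm^[d] f = f) := fun d hd => Nat.find_min hex hd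
    -- orbit = image of range m₀
    have horb : O = (Finset.range m₀).image (fun t => wm^[t] f) := by
      ext g
      rw [hO, orbitOf, Finset.mem_filter, Finset.mem_image]
      constructor
      · rintro ⟨-, t, rfl⟩
        refine ⟨t % m₀, Finset.mem_range.mpr (Nat.mod_lt _ hm₀pos), ?_⟩
        have := WhirlProof.iterate_mod_period f hm₀per (t / m₀) (t % m₀)
        rw [Nat.div_add_mod] at this
        exact this.symm
      · rintro ⟨t, -, rfl⟩
        exact ⟨Finset.mem_univ _, t, rfl⟩
    have hinj : Set.InjOn (fun t => wm^[t] f) (Finset.range m₀) := by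
      intro t ht t' ht' heq
      simp only [Finset.coe_range, Set.mem_Iio] at ht ht'
      by_contra hne
      rcases Nat.lt_trichotomy t t' with h | h | h
      · have : wm^[t + (t' - t)] f = wm^[t] f := by
          rw [show t + (t' - t) = t' by omega]; exact heq.symm
        have hcan := WhirlProof.iterate_cancel f hone hf t (t' - t) this
        exact hmin (t' - t) (by omega) ⟨by omega, hcan⟩
      · exact hne h
      · have : wm^[t' + (t - t')] f = wm^[t'] f := by
          rw [show t' + (t - t') = t by omega]; exact heq
        have hcan := WhirlProof.iterate_cancel f hone hf t' (t - t') this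
        exact hmin (t - t') (by omega) ⟨by omega, hcan⟩
    have hcard : O.card = m₀ := by
      rw [horb, Finset.card_image_of_injOn hinj, Finset.card_range]
    have hsum : (∑ g ∈ O, ((Finset.univ.filter fun i => g i = j).card : ℚ))
        = ∑ t ∈ Finset.range m₀, (((Finset.univ.filter fun i => wm^[t] f i = j).card : ℕ) : ℚ) := by
      rw [horb]
      rw [Finset.sum_image (fun x hx y hy h => hinj (by simpa using hx) (by simpa using hy) h)]
    -- switch to steps
    have hper : WhirlProof.steps f (m₀ * n) = f := by
      rw [← WhirlProof.iterate_whirlAll f hf m₀]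
      exact hm₀per
    have hsum2 : ∀ t, ((Finset.univ.filter fun i => wm^[t] f i = j).card : ℕ)
        = ((Finset.univ.filter fun p => WhirlProof.steps f (t*n) p = j).card : ℕ) := by
      intro t
      rw [hwm, WhirlProof.iterate_whirlAll f hf t]
    have hcnt : WhirlProof.cnt f m₀ j
        = ∑ t ∈ Finset.range m₀, (Finset.univ.filter fun p => WhirlProof.steps f (t*n) p = j).card :=
      WhirlProof.cnt_eq_sum_passes f j m₀
    have hkc : k * WhirlProof.cnt f m₀ j = m₀ * n :=
      WhirlProof.k_mul_cnt f m₀ hone hf hm₀pos hper j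
    -- final arithmetic
    have hsumq : (∑ g ∈ O, ((Finset.univ.filter fun i => g i = j).card : ℚ))
        = ((WhirlProof.cnt f m₀ j : ℕ) : ℚ) := by
      rw [hsum, hcnt]
      push_cast
      apply Finset.sum_congr rfl
      intro t _
      rw [hsum2 t]
    rw [hsumq, hcard]
    have hm₀0 : (m₀ : ℚ) ≠ 0 := by exact_mod_cast hm₀pos.ne'
    have hkq : (k : ℚ) ≠ 0 := by exact_mod_cast hk0
    rw [div_eq_div_iff hm₀0 hkq]
    have h2 : WhirlProof.cnt f m₀ j * k = n * m₀ := by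
      rw [Nat.mul_comm, hkc, Nat.mul_comm]
    exact_mod_cast h2
end

section
/- Let F = Sur_1(n,k) with w_i either adding 1 mod k to f(i) or fixing f(i). If f ∈ Sur_1(n,k) and f(j) = i, and i does not occur among the values (w_{j-1}∘⋯∘w_1 f)(j+1), ..., (w_{j-1}∘⋯∘w_1 f)(n), f(1)', ..., f(j-1)' read after partial whirling (equivalently, i occurs exactly once as an output of w_{j-1}∘⋯∘w_1(f)), then (w_j∘⋯∘w_1 f)(j) = i; otherwise (w_j∘⋯∘w_1 f)(j) = i+1 mod k. -/
open Finset

open scoped Classical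

/-- The partial whirl $w_t ∘ ⋯ ∘ w_1$ (whirling at the first `t` indices, left to right). -/
noncomputable def whirlUpTo {n k : ℕ} [NeZero k] (F : Set (Fin n → Fin k))
    (f : Fin n → Fin k) (t : ℕ) : Fin n → Fin k :=
  ((List.finRange n).take t).foldl (fun g i => whirl F i g) f

open Fin.NatCast

lemma whirl_apply_ne {n k : ℕ} [NeZero k] (F : Set (Fin n → Fin k)) (a j : Fin n)
    (hne : a ≠ j) (g : Fin n → Fin k) : whirl F a g j = g j := by
  unfold whirl
  split
  · exact Function.update_of_ne (fun h => hne h.symm) _ g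
  · rfl

lemma foldl_apply_not_mem {n k : ℕ} [NeZero k] (F : Set (Fin n → Fin k))
    (l : List (Fin n)) (j : Fin n) (hj : j ∉ l) (g : Fin n → Fin k) :
    (l.foldl (fun g i => whirl F i g) g) j = g j := by
  induction l generalizing g with
  | nil => rfl
  | cons a l ih =>
    simp only [List.mem_cons, not_or] at hj
    simp only [List.foldl_cons]
    rw [ih hj.2, whirl_apply_ne F a j (fun h => hj.1 h.symm)]

lemma whirl_mem_or_eq {n k : ℕ} [NeZero k] (F : Set (Fin n → Fin k)) (a : Fin n)
    (g : Fin n → Fin k) : whirl F a g ∈ F ∨ whirl F a g = g := by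
  rw [whirl]
  split
  · next h => exact Or.inl (Nat.find_spec h).2
  · exact Or.inr rfl

lemma whirl_surj {n k : ℕ} [NeZero k] (a : Fin n) (g : Fin n → Fin k)
    (hg : Function.Surjective g) :
    Function.Surjective (whirl {h : Fin n → Fin k | Function.Surjective h} a g) := by
  rcases whirl_mem_or_eq {h : Fin n → Fin k | Function.Surjective h} a g with h | h
  · exact h
  · rw [h]; exact hg

lemma whirlUpTo_surj {n k : ℕ} [NeZero k] (f : Fin n → Fin k)
    (hf : Function.Surjective f) (t : ℕ) :
    Function.Surjective (whirlUpTo {h : Fin n → Fin k | Function.Surjective h} f t) := by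
  unfold whirlUpTo
  generalize (List.finRange n).take t = l
  induction l generalizing f with
  | nil => exact hf
  | cons a l ih => exact ih _ (whirl_surj a f hf)

lemma whirlUpTo_succ {n k : ℕ} [NeZero k] (F : Set (Fin n → Fin k)) (f : Fin n → Fin k)
    (j : Fin n) :
    whirlUpTo F f (j.val + 1) = whirl F j (whirlUpTo F f j.val) := by
  unfold whirlUpTo
  rw [List.take_succ]
  have : (List.finRange n)[j.val]? = some j := by
    rw [List.getElem?_eq_getElem (by simp)]
    simp
  rw [this]
  simp [List.foldl_append]

lemma whirl_spec {n k : ℕ} [NeZero k] (F : Set (Fin n → Fin k)) (a : Fin n)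
    (g : Fin n → Fin k)
    (hex : ∃ t : ℕ, 0 < t ∧ Function.update g a (g a + (t : Fin k)) ∈ F) :
    ∃ c : ℕ, 0 < c ∧ Function.update g a (g a + (c : Fin k)) ∈ F ∧
      (∀ t : ℕ, 0 < t → Function.update g a (g a + (t : Fin k)) ∈ F → c ≤ t) ∧
      whirl F a g = Function.update g a (g a + (c : Fin k)) := by
  rw [whirl, dif_pos hex]
  exact ⟨Nat.find hex, (Nat.find_spec hex).1, (Nat.find_spec hex).2,
    fun t ht hm => Nat.find_le ⟨ht, hm⟩, rfl⟩

lemma not_mem_take_finRange {n : ℕ} (j : Fin n) :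
    j ∉ (List.finRange n).take j.val := by
  intro hmem
  obtain ⟨t, ht, hval⟩ := List.mem_take_iff_getElem.mp hmem
  have : t < j.val := lt_of_lt_of_le ht (min_le_left _ _)
  rw [List.getElem_finRange] at hval
  have := congrArg Fin.val hval
  simp at this
  omega

theorem stmt4 {n k : ℕ} [NeZero k] (hkn : k ≤ n)
    (f : Fin n → Fin k) (hf : Function.Surjective f) (j : Fin n) (i : Fin k)
    (hfj : f j = i) :
    ((Finset.univ.filter fun x =>
          whirlUpTo {h : Fin n → Fin k | Function.Surjective h} f j.val x = i).card = 1 →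
        whirlUpTo {h : Fin n → Fin k | Function.Surjective h} f (j.val + 1) j = i) ∧
    ((Finset.univ.filter fun x =>
          whirlUpTo {h : Fin n → Fin k | Function.Surjective h} f j.val x = i).card ≠ 1 →
        whirlUpTo {h : Fin n → Fin k | Function.Surjective h} f (j.val + 1) j = i + 1) := by
  set F : Set (Fin n → Fin k) := {h : Fin n → Fin k | Function.Surjective h} with hF
  set g : Fin n → Fin k := whirlUpTo F f j.val with hgdef
  have hg : Function.Surjective g := whirlUpTo_surj f hf j.val
  have hgj : g j = i := by
    rw [hgdef]
    unfold whirlUpTo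
    rw [foldl_apply_not_mem F _ j (not_mem_take_finRange j) f, hfj]
  have hex : ∃ t : ℕ, 0 < t ∧ Function.update g j (g j + (t : Fin k)) ∈ F := by
    refine ⟨k, Nat.pos_of_ne_zero (NeZero.ne k), ?_⟩
    rw [Fin.natCast_self, add_zero, Function.update_eq_self]
    exact hg
  obtain ⟨c, hc0, hcmem, hcmin, hceq⟩ := whirl_spec F j g hex
  have hkey : whirlUpTo F f (j.val + 1) j = g j + (c : Fin k) := by
    rw [whirlUpTo_succ F f j, ← hgdef, hceq, Function.update_self]
  have hjmem : j ∈ Finset.univ.filter fun x => g x = i := by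
    simp [hgj]
  constructor
  · intro h1
    have huniq : ∀ x, g x = i → x = j := by
      obtain ⟨a, ha⟩ := Finset.card_eq_one.mp h1
      intro x hx
      have hx' : x ∈ Finset.univ.filter fun x => g x = i := by simp [hx]
      rw [ha] at hx' hjmem
      rw [Finset.mem_singleton] at hx' hjmem
      rw [hx', hjmem]
    have hc0' : (c : Fin k) = 0 := by
      have hsurj : Function.Surjective (Function.update g j (g j + (c : Fin k))) := hcmem
      obtain ⟨x, hx⟩ := hsurj i
      by_cases hxj : x = j
      · rw [hxj, Function.update_self] at hx
        have : g j + (c : Fin k) = g j + 0 := by rw [add_zero, hx, hgj]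
        exact add_left_cancel this
      · rw [Function.update_of_ne hxj] at hx
        exact absurd (huniq x hx) hxj
    rw [hkey, hc0', add_zero, hgj]
  · intro h1
    have hcard : 1 < (Finset.univ.filter fun x => g x = i).card := by
      rcases Nat.lt_or_ge 1 (Finset.univ.filter fun x => g x = i).card with h | h
      · exact h
      · interval_cases hc : (Finset.univ.filter fun x => g x = i).card
        · exact absurd (Finset.card_eq_zero.mp hc ▸ hjmem) (Finset.notMem_empty j)
        · exact absurd rfl h1
    obtain ⟨x, hxmem, hxj⟩ := Finset.exists_mem_ne hcard j
    rw [Finset.mem_filter] at hxmem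
    have hx : g x = i := hxmem.2
    have hsurj1 : Function.update g j (g j + ((1 : ℕ) : Fin k)) ∈ F := by
      rw [hF]
      intro v
      by_cases hv : v = g j + ((1 : ℕ) : Fin k)
      · exact ⟨j, by rw [Function.update_self, hv]⟩
      · obtain ⟨y, hy⟩ := hg v
        by_cases hyj : y = j
        · refine ⟨x, ?_⟩
          rw [Function.update_of_ne hxj, hx, ← hgj, ← hyj, hy]
        · exact ⟨y, by rw [Function.update_of_ne hyj, hy]⟩
    have hc1 : c = 1 := le_antisymm (hcmin 1 one_pos hsurj1) hc0
    rw [hkey, hc1, Nat.cast_one, hgj]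
end

section
/- Define w̄ : Park(n) → Park(n) by applying w_1 and then cyclically shifting the tuple one place left (moving the first coordinate to the end). Then w̄^n = w, where w = w_n ∘ ⋯ ∘ w_1. -/
open Finset

open scoped Classical

/-- Parking functions: for each i, at least i+1 inputs have value ≤ i (0-indexed version of
\#f⁻¹([i]) ≥ i for all i ∈ [n]). -/
def Park (n : ℕ) : Set (Fin n → Fin n) :=
  {f | ∀ i : Fin n, i.val + 1 ≤ (Finset.univ.filter fun j => f j ≤ i).card}

/-- $\bar w$ : apply $w_1$, then cyclically shift the tuple one place left. -/
noncomputable def wbar {n : ℕ} [NeZero n] (f : Fin n → Fin n) : Fin n → Fin n :=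
  fun j => whirl (Park n) (0 : Fin n) f (j + 1)

open Fin.NatCast

/-- `Park n` is invariant under permuting the coordinates. -/
lemma park_comp_perm {n : ℕ} (g : Fin n → Fin n) (e : Equiv.Perm (Fin n)) :
    g ∘ e ∈ Park n ↔ g ∈ Park n := by
  have hcard : ∀ i : Fin n,
      (Finset.univ.filter fun j => g (e j) ≤ i).card
        = (Finset.univ.filter fun j => g j ≤ i).card := by
    intro i
    rw [← Finset.card_map ⟨e, e.injective⟩]
    congr 1
    ext j
    simp only [Finset.mem_map, Finset.mem_filter, Finset.mem_univ, true_and,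
      Function.Embedding.coeFn_mk]
    constructor
    · rintro ⟨a, ha, rfl⟩; exact ha
    · intro h; exact ⟨e.symm j, by simpa using h, by simp⟩
  constructor <;> intro h i <;> have := h i
  · rw [← hcard i]; exact this
  · rw [show ((Finset.univ.filter fun j => (g ∘ e) j ≤ i)).card
      = (Finset.univ.filter fun j => g j ≤ i).card from hcard i]; exact this

/-- `whirl` is equivariant with respect to permutations of the coordinates,
provided the target set is permutation-invariant. -/
lemma whirl_comp_perm {n k : ℕ} [NeZero k] (F : Set (Fin n → Fin k))
    (hF : ∀ g (e : Equiv.Perm (Fin n)), g ∘ e ∈ F ↔ g ∈ F)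
    (e : Equiv.Perm (Fin n)) (i : Fin n) (g : Fin n → Fin k) :
    whirl F i (g ∘ e) = whirl F (e i) g ∘ e := by
  have hup : ∀ v : Fin k,
      Function.update (g ∘ e) i v = Function.update g (e i) v ∘ e := by
    intro v
    rw [Function.update_comp_equiv g e (e i) v, Equiv.symm_apply_apply]
  have key : ∀ t : ℕ,
      (0 < t ∧ Function.update (g ∘ e) i ((g ∘ e) i + (t : Fin k)) ∈ F) ↔
      (0 < t ∧ Function.update g (e i) (g (e i) + (t : Fin k)) ∈ F) := by
    intro t
    constructor
    · rintro ⟨ht, hmem⟩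
      refine ⟨ht, ?_⟩
      rw [show (g ∘ e) i = g (e i) from rfl, hup] at hmem
      exact (hF _ e).mp hmem
    · rintro ⟨ht, hmem⟩
      refine ⟨ht, ?_⟩
      rw [show (g ∘ e) i = g (e i) from rfl, hup]
      exact (hF _ e).mpr hmem
  by_cases h1 : ∃ t : ℕ, 0 < t ∧ Function.update (g ∘ e) i ((g ∘ e) i + (t : Fin k)) ∈ F
  · have h2 : ∃ t : ℕ, 0 < t ∧ Function.update g (e i) (g (e i) + (t : Fin k)) ∈ F :=
      (exists_congr key).mp h1
    rw [whirl, dif_pos h1, whirl, dif_pos h2]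
    have hfind : Nat.find h1 = Nat.find h2 :=
      le_antisymm (Nat.find_mono fun t ht => (key t).mpr ht)
        (Nat.find_mono fun t ht => (key t).mp ht)
    rw [hfind]
    exact hup _
  · have h2 : ¬ ∃ t : ℕ, 0 < t ∧ Function.update g (e i) (g (e i) + (t : Fin k)) ∈ F :=
      fun h => h1 ((exists_congr key).mpr h)
    rw [whirl, dif_neg h1, whirl, dif_neg h2]

/-- Applying `whirl` at coordinates `0, 1, ..., m-1` in order. -/
noncomputable def Wpartial {n : ℕ} [NeZero n] (m : ℕ) (f : Fin n → Fin n) :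
    Fin n → Fin n :=
  (List.range m).foldl (fun g (i : ℕ) => whirl (Park n) ((i : Fin n)) g) f

lemma Wpartial_succ {n : ℕ} [NeZero n] (m : ℕ) (f : Fin n → Fin n) :
    Wpartial (m + 1) f = whirl (Park n) (m : Fin n) (Wpartial m f) := by
  unfold Wpartial
  rw [List.range_succ, List.foldl_append]
  rfl

lemma Wpartial_eq_whirlAll {n : ℕ} [NeZero n] (f : Fin n → Fin n) :
    Wpartial n f = whirlAll (Park n) f := by
  unfold Wpartial whirlAll
  have h : List.finRange n = (List.range n).map (fun i : ℕ => (i : Fin n)) := by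
    rw [← (show (List.finRange n).map Fin.val = List.range n from
      List.ext_getElem (by simp) (by simp)), List.map_map]
    rw [show ((fun i : ℕ => (i : Fin n)) ∘ Fin.val) = id from
      funext fun j => Fin.cast_val_eq_self j, List.map_id]
  rw [h, List.foldl_map]

lemma wbar_iter {n : ℕ} [NeZero n] (f : Fin n → Fin n) (m : ℕ) :
    wbar^[m] f = fun j => Wpartial m f (j + (m : Fin n)) := by
  induction m with
  | zero => funext j; simp [Wpartial]
  | succ m ih =>
    rw [Function.iterate_succ_apply', ih]
    have hcomp : (fun j : Fin n => Wpartial m f (j + (m : Fin n)))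
        = (Wpartial m f) ∘ (Equiv.addRight (m : Fin n)) := by
      funext j; simp
    rw [hcomp]
    funext j
    show whirl (Park n) 0 (Wpartial m f ∘ (Equiv.addRight (m : Fin n))) (j + 1)
      = Wpartial (m + 1) f (j + ((m : ℕ) + 1 : ℕ))
    rw [whirl_comp_perm _ park_comp_perm (Equiv.addRight (m : Fin n)) 0 (Wpartial m f)]
    rw [Wpartial_succ]
    simp only [Function.comp_apply, Equiv.coe_addRight, zero_add]
    congr 1
    push_cast
    rw [add_assoc, add_comm (1 : Fin n) (m : Fin n)]

theorem stmt12 {n : ℕ} [NeZero n] (f : Fin n → Fin n) (hf : f ∈ Park n) :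
    wbar^[n] f = whirlAll (Park n) f := by
  rw [wbar_iter f n, ← Wpartial_eq_whirlAll]
  funext j
  rw [Fin.natCast_self, add_zero]
end

section
/- The map f ↦ f̄, where f̄(i) = f(i) + i − 1, is a bijection from OP(n,k) (weakly increasing maps [n] → [k]) to OP_inj(n,k+n−1) (strictly increasing maps [n] → [k+n−1]), and it intertwines the whirl maps: for every i ∈ [n] and f ∈ OP(n,k), the strict-whirl W_i applied to f̄ equals the image under the bijection of the weak-whirl w_i applied to f. -/
open Finset

open scoped Classical

/-- Weakly increasing (order-preserving) maps. -/
def OP (n k : ℕ) : Set (Fin n → Fin k) := {f | Monotone f}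

/-- Strictly increasing maps. -/
def OPinj (n k : ℕ) : Set (Fin n → Fin k) := {f | StrictMono f}

/-- The map $f ↦ \bar f$, $\bar f(i) = f(i) + i - 1$ (0-indexed: $\bar f(i) = f(i) + i$). -/
def opBar {n k : ℕ} (f : Fin n → Fin k) : Fin n → Fin (k + n - 1) := fun i =>
  ⟨(f i).val + i.val, by have h1 := (f i).isLt; have h2 := i.isLt; omega⟩

lemma strictMono_val_add {n k : ℕ} {g : Fin n → Fin k} (hg : StrictMono g) :
    ∀ d : ℕ, ∀ i j : Fin n, j.val = i.val + d → (g i).val + d ≤ (g j).val := by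
  intro d
  induction d with
  | zero =>
    intro i j h
    have : j = i := Fin.ext (by omega)
    subst this; omega
  | succ d ih =>
    intro i j h
    have hj' : i.val + d < n := by have := j.isLt; omega
    have h1 := ih i ⟨i.val + d, hj'⟩ rfl
    have h2 : (⟨i.val + d, hj'⟩ : Fin n) < j := by rw [Fin.lt_def]; simp; omega
    have h3 := hg h2
    rw [Fin.lt_def] at h3
    simp at h1 h3
    omega

lemma update_mono_iff_strict {m k K : ℕ} {f : Fin (m+1) → Fin k}
    (i : Fin (m+1)) (v : Fin k) (V : Fin K) (hV : V.val = v.val + i.val)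
    (F : Fin (m+1) → Fin K) (hF : ∀ j, (F j).val = (f j).val + j.val) :
    Monotone (Function.update f i v) ↔ StrictMono (Function.update F i V) := by
  rw [Fin.monotone_iff_le_succ, Fin.strictMono_iff_lt_succ]
  apply forall_congr'
  intro j
  have hne : j.castSucc ≠ j.succ := (Fin.castSucc_lt_succ (i := j)).ne
  by_cases h1 : j.castSucc = i
  · have h2 : j.succ ≠ i := by rw [← h1]; exact hne.symm
    rw [h1]
    simp only [Function.update_self, Function.update_of_ne h2]
    rw [Fin.le_def, Fin.lt_def, hV, hF, ← h1]
    simp [Fin.val_succ]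
    omega
  · by_cases h2 : j.succ = i
    · rw [h2]
      simp only [Function.update_self, Function.update_of_ne h1]
      rw [Fin.le_def, Fin.lt_def, hV, hF, ← h2]
      simp [Fin.val_succ]
      omega
    · simp only [Function.update_of_ne h1, Function.update_of_ne h2]
      rw [Fin.le_def, Fin.lt_def, hF, hF]
      simp [Fin.val_succ]
      omega

open Fin.NatCast in
theorem stmt18 {n k : ℕ} [NeZero k] [NeZero (k + n - 1)] (hn : 1 ≤ n) :
    Set.BijOn (opBar : (Fin n → Fin k) → (Fin n → Fin (k + n - 1))) (OP n k)
      (OPinj n (k + n - 1)) ∧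
    ∀ i : Fin n, ∀ f ∈ OP n k,
      opBar (whirl (OP n k) i f) = whirl (OPinj n (k + n - 1)) i (opBar f) := by
  have hk : 0 < k := NeZero.pos k
  have hKpos : 0 < k + n - 1 := NeZero.pos _
  have hmaps : ∀ f : Fin n → Fin k, Monotone f → StrictMono (opBar f) := by
    intro f hf x y hxy
    have h1 : (f x).val ≤ (f y).val := hf hxy.le
    rw [Fin.lt_def] at hxy ⊢
    simp only [opBar]
    omega
  constructor
  · refine ⟨fun f hf => hmaps f hf, fun f hf g hg he => ?_, fun g hg => ?_⟩
    · funext j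
      have hv : (f j).val + j.val = (g j).val + j.val := congrArg Fin.val (congrFun he j)
      exact Fin.ext (by omega)
    · have hg' : StrictMono g := hg
      have hlow : ∀ j : Fin n, j.val ≤ (g j).val := by
        intro j
        have := strictMono_val_add hg' j.val ⟨0, by omega⟩ j (by simp)
        omega
      have hbound : ∀ j : Fin n, (g j).val - j.val < k := by
        intro j
        have h1 := strictMono_val_add hg' (n - 1 - j.val) j ⟨n - 1, by omega⟩
          (by simp; have := j.isLt; omega)
        have h2 := (g ⟨n - 1, by omega⟩).isLt
        have := j.isLt
        omega
      refine ⟨fun j => ⟨(g j).val - j.val, hbound j⟩, ?_, ?_⟩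
      · intro x y hxy
        rw [Fin.le_def] at hxy ⊢
        simp only
        have h1 := strictMono_val_add hg' (y.val - x.val) x y (by omega)
        have h2 := hlow x
        omega
      · funext j
        exact Fin.ext (by simp [opBar]; have := hlow j; omega)
  · intro i f hf
    obtain ⟨m, rfl⟩ : ∃ m, n = m + 1 := ⟨n - 1, by omega⟩
    have hf' : Monotone f := hf
    set K := k + (m + 1) - 1 with hKdef
    have hKm : K = k + m := by omega
    set a := (f i).val with ha
    have hai : a < k := (f i).isLt
    have hii : i.val < m + 1 := i.isLt
    have val_add_w : ∀ t : ℕ, ((f i) + (t : Fin k)).val = (a + t) % k := by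
      intro t
      rw [Fin.add_def]
      simp [Fin.val_natCast, ha]
    have val_add_s : ∀ s : ℕ, ((opBar f i) + (s : Fin K)).val = (a + i.val + s) % K := by
      intro s
      rw [Fin.add_def]
      simp only [Fin.val_natCast, opBar]
      rw [Nat.add_mod_mod]
    have core : ∀ (v : Fin k) (V : Fin K), V.val = v.val + i.val →
        (Function.update f i v ∈ OP (m+1) k ↔
          Function.update (opBar f) i V ∈ OPinj (m+1) K) := by
      intro v V hV
      exact update_mono_iff_strict i v V hV (opBar f) (fun j => rfl)
    have hkcast : ((k : ℕ) : Fin k) = 0 := Fin.natCast_self k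
    have hP : ∃ t : ℕ, 0 < t ∧ Function.update f i ((f i) + (t : Fin k)) ∈ OP (m+1) k := by
      refine ⟨k, hk, ?_⟩
      rw [hkcast, add_zero, Function.update_eq_self]
      exact hf
    have hQ : ∃ s : ℕ, 0 < s ∧
        Function.update (opBar f) i ((opBar f i) + (s : Fin K)) ∈ OPinj (m+1) K := by
      refine ⟨K, hKpos, ?_⟩
      rw [Fin.natCast_self K, add_zero, Function.update_eq_self]
      exact hmaps f hf'
    set t₀ := Nat.find hP with ht₀def
    have ht₀pos : 0 < t₀ := (Nat.find_spec hP).1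
    have ht₀mem : Function.update f i ((f i) + (t₀ : Fin k)) ∈ OP (m+1) k :=
      (Nat.find_spec hP).2
    have ht₀le : t₀ ≤ k := Nat.find_min' hP ⟨hk, by
      rw [hkcast, add_zero, Function.update_eq_self]; exact hf⟩
    set s₀ : ℕ := if a + t₀ < k then t₀ else t₀ + m with hs₀def
    have hs₀pos : 0 < s₀ := by rw [hs₀def]; split <;> omega
    have hs₀le : s₀ ≤ t₀ + m := by rw [hs₀def]; split <;> omega
    have modcorr : ∀ t : ℕ, 1 ≤ t → t ≤ k →
        (a + i.val + (if a + t < k then t else t + m)) % K = (a + t) % k + i.val := by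
      intro t h1 h2
      by_cases hc : a + t < k
      · rw [if_pos hc, Nat.mod_eq_of_lt (by omega), Nat.mod_eq_of_lt hc]; omega
      · rw [if_neg hc]
        have h3 : (a + t) % k = a + t - k := by
          rw [Nat.mod_eq_sub_mod (by omega), Nat.mod_eq_of_lt (by omega)]
        rw [h3]
        have h4 : a + i.val + (t + m) = (a + t - k + i.val) + K := by omega
        rw [h4, Nat.add_mod_right, Nat.mod_eq_of_lt (by omega)]
    have memcorr : ∀ t : ℕ, 1 ≤ t → t ≤ k →
        (Function.update f i ((f i) + (t : Fin k)) ∈ OP (m+1) k ↔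
          Function.update (opBar f) i
            ((opBar f i) + (((if a + t < k then t else t + m) : ℕ) : Fin K)) ∈
            OPinj (m+1) K) := by
      intro t h1 h2
      apply core
      rw [val_add_s, val_add_w, modcorr t h1 h2]
    have hQmem : Function.update (opBar f) i ((opBar f i) + (s₀ : Fin K)) ∈
        OPinj (m+1) K := by
      have := (memcorr t₀ ht₀pos ht₀le).1 ht₀mem
      rwa [← hs₀def] at this
    have hfind : Nat.find hQ = s₀ := by
      rw [Nat.find_eq_iff]
      refine ⟨⟨hs₀pos, hQmem⟩, ?_⟩
      rintro s hs ⟨hspos, hsmem⟩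
      by_cases hcA : a + s < k
      · -- case A
        have hPs := (memcorr s hspos (by omega)).2
        rw [if_pos hcA] at hPs
        have hmin : t₀ ≤ s := Nat.find_min' hP ⟨hspos, hPs hsmem⟩
        have : s₀ = t₀ := by rw [hs₀def, if_pos (by omega)]
        omega
      · by_cases hcB : m + (k - a) ≤ s
        · -- case B
          set t : ℕ := s - m with htdef
          have h1 : 1 ≤ t := by omega
          have h2 : t ≤ k := by omega
          have hPs := (memcorr t h1 h2).2
          rw [if_neg (by omega)] at hPs
          have hts : t + m = s := by omega
          rw [hts] at hPs
          have hmin : t₀ ≤ t := Nat.find_min' hP ⟨by omega, hPs hsmem⟩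
          omega
        · -- case C : gap, derive contradiction from strict monotonicity
          exfalso
          have hrange : k ≤ a + s ∧ a + s < k + m := by omega
          have hwval := val_add_s s
          by_cases hcc : a + i.val + s < K
          · have hw : ((opBar f i) + (s : Fin K)).val = a + i.val + s := by
              rw [hwval, Nat.mod_eq_of_lt hcc]
            have him : i.val + 1 < m + 1 := by omega
            set j : Fin (m+1) := ⟨i.val + 1, him⟩ with hjdef
            have hij : i < j := by rw [Fin.lt_def]; simp [hjdef]
            have hji : j ≠ i := Fin.ne_of_val_ne (by simp [hjdef])
            have hlt := hsmem hij
            rw [Function.update_self, Function.update_of_ne hji, Fin.lt_def, hw] at hlt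
            have hfj : (f j).val < k := (f j).isLt
            have : (opBar f j).val = (f j).val + (i.val + 1) := by simp [opBar, hjdef]
            omega
          · have hw : ((opBar f i) + (s : Fin K)).val = a + i.val + s - K := by
              rw [hwval, Nat.mod_eq_sub_mod (by omega), Nat.mod_eq_of_lt (by omega)]
            have hipos : 1 ≤ i.val := by omega
            set j : Fin (m+1) := ⟨i.val - 1, by omega⟩ with hjdef
            have hij : j < i := by rw [Fin.lt_def]; show i.val - 1 < i.val; omega
            have hji : j ≠ i := Fin.ne_of_val_ne (by simp [hjdef]; omega)
            have hlt := hsmem hij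
            rw [Function.update_self, Function.update_of_ne hji, Fin.lt_def, hw] at hlt
            have : (opBar f j).val = (f j).val + (i.val - 1) := by simp [opBar, hjdef]
            omega
    show opBar (whirl (OP (m+1) k) i f) = whirl (OPinj (m+1) K) i (opBar f)
    rw [whirl, whirl, dif_pos hP, dif_pos hQ, hfind]
    funext j
    by_cases hj : j = i
    · subst hj
      refine Fin.ext ?_
      have hL : (opBar (Function.update f j ((f j) + ((t₀ : ℕ) : Fin k))) j).val =
          (a + t₀) % k + j.val := by
        simp [opBar, Function.update_self, val_add_w]
      have hR : (Function.update (opBar f) j ((opBar f j) + (s₀ : Fin K)) j).val =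
          (a + j.val + s₀) % K := by
        simp [Function.update_self, val_add_s]
      rw [hL, hR]
      have := modcorr t₀ ht₀pos ht₀le
      rw [← hs₀def] at this
      omega
    · refine Fin.ext ?_
      simp [opBar, Function.update_of_ne hj]
end
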